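/- For all real numbers a and b, (ν(a) − ν(b))² ≤ L_β · L_ζ · (ζ(a) − ζ(b)) · (β(a) − β(b)), where ν(s) = ∫₀ˢ ζ'(q) β'(q) dq. -/

import Mathlib

open MeasureTheory intervalIntegral

lemma mono_deriv_nonneg {f : ℝ → ℝ} (hm : Monotone f) (x : ℝ) : 0 ≤ deriv f x := by
  by_cases h : DifferentiableAt ℝ f x
  · have h1 := h.hasDerivAt
    rw [hasDerivAt_iff_tendsto_slope] at h1
    have h2 : Filter.Tendsto (slope f x) (nhdsWithin x (Set.Ioi x)) (nhds (deriv f x)) :=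
      h1.mono_left (nhdsWithin_mono x (fun y hy => ne_of_gt hy))
    refine ge_of_tendsto h2 ?_
    filter_upwards [self_mem_nhdsWithin] with y hy
    rw [slope_def_field]
    have hxy : x < y := hy
    exact div_nonneg (sub_nonneg.2 (hm hxy.le)) (sub_nonneg.2 hxy.le)
  · rw [deriv_zero_of_not_differentiableAt h]

lemma lip_deriv_le {f : ℝ → ℝ} {K : NNReal} (h : LipschitzWith K f) (x : ℝ) :
    deriv f x ≤ K := by
  have h1 : ‖deriv f x‖ ≤ (K : ℝ) := by
    calc ‖deriv f x‖ = ‖fderiv ℝ f x 1‖ := by rw [fderiv_apply_one_eq_deriv]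
    _ ≤ ‖fderiv ℝ f x‖ * ‖(1 : ℝ)‖ := (fderiv ℝ f x).le_opNorm 1
    _ ≤ (K : ℝ) * 1 := by
        gcongr
        · exact norm_fderiv_le_of_lipschitz ℝ h
        · simp
    _ = K := mul_one _
  exact (abs_le.1 (Real.norm_eq_abs _ ▸ h1)).2

lemma ftc_le {f : ℝ → ℝ} (hm : Monotone f) (hc : Continuous f) {b a : ℝ} (hba : b ≤ a) :
    ∫ x in b..a, deriv f x ≤ f a - f b := by
  have hd : ∀ᵐ x, deriv f x = (Measure.rnDeriv hm.stieltjesFunction.measure volume x).toReal := by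
    filter_upwards [hm.ae_hasDerivAt] with x hx using hx.deriv
  have hst : ∀ x, hm.stieltjesFunction x = f x := by
    intro x
    rw [hm.stieltjesFunction_eq]
    exact rightLim_eq_of_tendsto (h := nhdsGT_neBot x)
      ((hc.tendsto x).mono_left nhdsWithin_le_nhds)
  rw [intervalIntegral.integral_of_le hba]
  calc ∫ x in Set.Ioc b a, deriv f x
      = ∫ x in Set.Ioc b a, (Measure.rnDeriv hm.stieltjesFunction.measure volume x).toReal :=
        integral_congr_ae (ae_restrict_of_ae hd)
    _ ≤ (hm.stieltjesFunction.measure (Set.Ioc b a)).toReal := by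
        apply Measure.setIntegral_toReal_rnDeriv_le
        rw [StieltjesFunction.measure_Ioc]
        exact ENNReal.ofReal_ne_top
    _ = f a - f b := by
        rw [StieltjesFunction.measure_Ioc, hst, hst,
          ENNReal.toReal_ofReal (sub_nonneg.2 (hm hba))]

lemma stmt1_aux (β ζ : ℝ → ℝ) (Lβ Lζ : ℝ) (hLβ : 0 < Lβ) (hLζ : 0 < Lζ)
    (hβmono : Monotone β) (hζmono : Monotone ζ)
    (hβlip : LipschitzWith Lβ.toNNReal β) (hζlip : LipschitzWith Lζ.toNNReal ζ)
    (ν : ℝ → ℝ) (hν : ∀ s : ℝ, ν s = ∫ q in (0:ℝ)..s, deriv ζ q * deriv β q)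
    (a b : ℝ) (hba : b ≤ a) :
    (ν a - ν b) ^ 2 ≤ Lβ * Lζ * (ζ a - ζ b) * (β a - β b) := by
  have hβK : (Lβ.toNNReal : ℝ) = Lβ := Real.coe_toNNReal _ hLβ.le
  have hζK : (Lζ.toNNReal : ℝ) = Lζ := Real.coe_toNNReal _ hLζ.le
  have hβd : ∀ x, 0 ≤ deriv β x ∧ deriv β x ≤ Lβ := fun x =>
    ⟨mono_deriv_nonneg hβmono x, hβK ▸ lip_deriv_le hβlip x⟩
  have hζd : ∀ x, 0 ≤ deriv ζ x ∧ deriv ζ x ≤ Lζ := fun x =>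
    ⟨mono_deriv_nonneg hζmono x, hζK ▸ lip_deriv_le hζlip x⟩
  -- integrability
  have hmeas : Measurable (fun q => deriv ζ q * deriv β q) :=
    (measurable_deriv ζ).mul (measurable_deriv β)
  have hint : ∀ u v : ℝ, IntervalIntegrable (fun q => deriv ζ q * deriv β q) volume u v := by
    intro u v
    rw [intervalIntegrable_iff]
    refine (integrableOn_const (C := Lζ * Lβ) measure_Ioc_lt_top.ne :
      IntegrableOn (fun _ => Lζ * Lβ) _ _).mono' hmeas.aestronglyMeasurable.restrict ?_
    refine Filter.Eventually.of_forall fun x => ?_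
    rw [Real.norm_eq_abs, abs_of_nonneg (mul_nonneg (hζd x).1 (hβd x).1)]
    exact mul_le_mul (hζd x).2 (hβd x).2 (hβd x).1 hLζ.le
  have hβint : ∀ u v : ℝ, IntervalIntegrable (fun q => deriv β q) volume u v := fun u v =>
    (intervalIntegrable_iff.2 ((integrableOn_const (C := Lβ) measure_Ioc_lt_top.ne :
      IntegrableOn (fun _ => Lβ) _ _).mono'
      (measurable_deriv β).aestronglyMeasurable.restrict
      (Filter.Eventually.of_forall fun x => by
        rw [Real.norm_eq_abs, abs_of_nonneg (hβd x).1]; exact (hβd x).2)))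
  have hζint : ∀ u v : ℝ, IntervalIntegrable (fun q => deriv ζ q) volume u v := fun u v =>
    (intervalIntegrable_iff.2 ((integrableOn_const (C := Lζ) measure_Ioc_lt_top.ne :
      IntegrableOn (fun _ => Lζ) _ _).mono'
      (measurable_deriv ζ).aestronglyMeasurable.restrict
      (Filter.Eventually.of_forall fun x => by
        rw [Real.norm_eq_abs, abs_of_nonneg (hζd x).1]; exact (hζd x).2)))
  have hdiff : ν a - ν b = ∫ q in b..a, deriv ζ q * deriv β q := by
    rw [hν, hν]
    exact intervalIntegral.integral_interval_sub_left (hint 0 a) (hint 0 b)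
  set I := ∫ q in b..a, deriv ζ q * deriv β q with hI
  have hI0 : 0 ≤ I := by
    apply intervalIntegral.integral_nonneg hba
    exact fun x _ => mul_nonneg (hζd x).1 (hβd x).1
  have h1 : I ≤ Lζ * (β a - β b) := by
    calc I ≤ ∫ q in b..a, Lζ * deriv β q := by
          apply intervalIntegral.integral_mono_on hba (hint b a)
            ((hβint b a).const_mul Lζ)
          exact fun x _ => mul_le_mul_of_nonneg_right (hζd x).2 (hβd x).1
      _ = Lζ * ∫ q in b..a, deriv β q := by
          rw [← intervalIntegral.integral_const_mul]
      _ ≤ Lζ * (β a - β b) :=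
          mul_le_mul_of_nonneg_left (ftc_le hβmono hβlip.continuous hba) hLζ.le
  have h2 : I ≤ Lβ * (ζ a - ζ b) := by
    calc I ≤ ∫ q in b..a, Lβ * deriv ζ q := by
          apply intervalIntegral.integral_mono_on hba (hint b a)
            ((hζint b a).const_mul Lβ)
          exact fun x _ => by
            rw [mul_comm]
            exact mul_le_mul_of_nonneg_right (hβd x).2 (hζd x).1
      _ = Lβ * ∫ q in b..a, deriv ζ q := by
          rw [← intervalIntegral.integral_const_mul]
      _ ≤ Lβ * (ζ a - ζ b) :=
          mul_le_mul_of_nonneg_left (ftc_le hζmono hζlip.continuous hba) hLβ.le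
  have hRnn : 0 ≤ Lζ * (β a - β b) := mul_nonneg hLζ.le (sub_nonneg.2 (hβmono hba))
  rw [hdiff]
  calc I ^ 2 = I * I := sq I
    _ ≤ (Lβ * (ζ a - ζ b)) * (Lζ * (β a - β b)) := mul_le_mul h2 h1 hI0
        (mul_nonneg hLβ.le (sub_nonneg.2 (hζmono hba)))
    _ = Lβ * Lζ * (ζ a - ζ b) * (β a - β b) := by ring

theorem stmt1 (β ζ : ℝ → ℝ) (Lβ Lζ : ℝ) (hLβ : 0 < Lβ) (hLζ : 0 < Lζ)
    (hβmono : Monotone β) (hζmono : Monotone ζ)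
    (hβlip : LipschitzWith Lβ.toNNReal β) (hζlip : LipschitzWith Lζ.toNNReal ζ)
    (hβ0 : β 0 = 0) (hζ0 : ζ 0 = 0)
    (ν : ℝ → ℝ) (hν : ∀ s : ℝ, ν s = ∫ q in (0:ℝ)..s, deriv ζ q * deriv β q)
    (a b : ℝ) :
    (ν a - ν b) ^ 2 ≤ Lβ * Lζ * (ζ a - ζ b) * (β a - β b) := by
  rcases le_total b a with h | h
  · exact stmt1_aux β ζ Lβ Lζ hLβ hLζ hβmono hζmono hβlip hζlip ν hν a b h
  · have := stmt1_aux β ζ Lβ Lζ hLβ hLζ hβmono hζmono hβlip hζlip ν hν b a h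
    nlinarith [this]
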